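/- Let G be a directed acyclic graph on a finite vertex set V and let X ∈ V. If a subset S ⊆ V \ {X} d-separates X from every vertex in V \ (S ∪ {X}), then mb(X) = Pa(X) ∪ Ch(X) ∪ Sp(X) is contained in S. Consequently, mb(X) is the unique minimal subset S ⊆ V \ {X} that d-separates X from every vertex outside S ∪ {X}. -/

import Mathlib

open MeasureTheory ProbabilityTheory Set

namespace CFS

variable {V : Type*}

/-- Parents of `v`: vertices with an edge into `v`. -/
def Pa (E : V → V → Prop) (v : V) : Set V := {u | E u v}

/-- Children of `v`: vertices with an edge from `v`. -/
def Ch (E : V → V → Prop) (v : V) : Set V := {u | E v u}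

/-- Descendants of `v`: vertices reachable from `v` by a nonempty directed path. -/
def Desc (E : V → V → Prop) (v : V) : Set V := {u | Relation.TransGen E v u}

/-- Spouses of `v`: the other parents of the children of `v`. -/
def Sp (E : V → V → Prop) (v : V) : Set V := {u | u ≠ v ∧ ∃ w, E u w ∧ E v w}

/-- The Markov blanket set `mb(v)` in the graph: parents, children and spouses. -/
def mb (E : V → V → Prop) (v : V) : Set V := Pa E v ∪ Ch E v ∪ Sp E v

/-- The edge relation is acyclic (defines a DAG). -/
def Acyclic (E : V → V → Prop) : Prop := ∀ v, ¬ Relation.TransGen E v v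

/-- Adjacency: an edge in either direction. -/
def Adj (E : V → V → Prop) (u v : V) : Prop := E u v ∨ E v u

/-- `f 0, f 1, …, f n` is an undirected path between `i` and `j`:
distinct vertices, consecutive ones adjacent. -/
structure IsUPath (E : V → V → Prop) (i j : V) (n : ℕ) (f : ℕ → V) : Prop where
  pos : 0 < n
  start : f 0 = i
  finish : f n = j
  inj : ∀ s ≤ n, ∀ t ≤ n, f s = f t → s = t
  adj : ∀ t < n, Adj E (f t) (f (t + 1))

/-- The interior vertex at position `t` of the path `f` is a collider:
both incident edges of the path point into it. -/
def ColliderAt (E : V → V → Prop) (f : ℕ → V) (t : ℕ) : Prop :=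
  E (f (t - 1)) (f t) ∧ E (f (t + 1)) (f t)

/-- The path `f 0, …, f n` is blocked by `S`: some interior non-collider lies in `S`,
or some interior collider is such that neither it nor any of its descendants lies in `S`. -/
def Blocked (E : V → V → Prop) (S : Set V) (n : ℕ) (f : ℕ → V) : Prop :=
  ∃ t, 0 < t ∧ t < n ∧
    ((¬ ColliderAt E f t ∧ f t ∈ S) ∨
      (ColliderAt E f t ∧ f t ∉ S ∧ ∀ d ∈ Desc E (f t), d ∉ S))

/-- `i` and `j` are d-separated by `S`: every undirected path between them is blocked by `S`. -/
def DSep (E : V → V → Prop) (i j : V) (S : Set V) : Prop :=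
  ∀ n f, IsUPath E i j n f → Blocked E S n f

/-- The sets `A` and `B` are d-separated by `S`. -/
def DSepSet (E : V → V → Prop) (A B S : Set V) : Prop :=
  ∀ i ∈ A, ∀ j ∈ B, DSep E i j S

variable {Ω Val : Type*} [mΩ : MeasurableSpace Ω] [MeasurableSpace Val]

/-- The σ-algebra generated by the family of random variables `(X v)_{v ∈ A}`. -/
def famSigma (X : V → Ω → Val) (A : Set V) : MeasurableSpace Ω :=
  ⨆ v ∈ A, MeasurableSpace.comap (X v) inferInstance

theorem famSigma_le {X : V → Ω → Val} (hX : ∀ v, Measurable (X v)) (A : Set V) :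
    famSigma X A ≤ mΩ :=
  iSup₂_le fun v _ => (hX v).comap_le

/-- The families `(X a)_{a ∈ A}` and `(X b)_{b ∈ B}` are conditionally independent
given the family `(X s)_{s ∈ S}`. -/
def CondIndepFam [StandardBorelSpace Ω] (X : V → Ω → Val) (hX : ∀ v, Measurable (X v))
    (P : Measure Ω) [IsFiniteMeasure P] (S A B : Set V) : Prop :=
  CondIndep (famSigma X S) (famSigma X A) (famSigma X B) (famSigma_le hX S) P

/-- The Markov condition: every variable is conditionally independent of its
non-descendants (other than itself and its parents) given its parents. -/
def MarkovCondition [StandardBorelSpace Ω] (E : V → V → Prop) (X : V → Ω → Val)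
    (hX : ∀ v, Measurable (X v)) (P : Measure Ω) [IsFiniteMeasure P] : Prop :=
  ∀ v, CondIndepFam X hX P (Pa E v) {v} (univ \ ({v} ∪ Desc E v ∪ Pa E v))

/-- `M ⊆ V \ {C}` is a Markov blanket of `C`: conditioned on `(X m)_{m ∈ M}`,
all other variables are independent of `X C`. -/
def IsMarkovBlanket [StandardBorelSpace Ω] (X : V → Ω → Val) (hX : ∀ v, Measurable (X v))
    (P : Measure Ω) [IsFiniteMeasure P] (C : V) (M : Set V) : Prop :=
  C ∉ M ∧ CondIndepFam X hX P M {C} (univ \ (M ∪ {C}))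

/-- A Markov boundary of `C` is a Markov blanket of `C` no proper subset of which
is a Markov blanket of `C`. -/
def IsMarkovBoundary [StandardBorelSpace Ω] (X : V → Ω → Val) (hX : ∀ v, Measurable (X v))
    (P : Measure Ω) [IsFiniteMeasure P] (C : V) (M : Set V) : Prop :=
  IsMarkovBlanket X hX P C M ∧ ∀ M' ⊂ M, ¬ IsMarkovBlanket X hX P C M'

/-- Faithfulness: conditional independence holds exactly when d-separation holds. -/
def Faithful [StandardBorelSpace Ω] (E : V → V → Prop) (X : V → Ω → Val)
    (hX : ∀ v, Measurable (X v)) (P : Measure Ω) [IsFiniteMeasure P] : Prop :=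
  ∀ A B S : Set V, A.Nonempty → B.Nonempty →
    Disjoint A B → Disjoint A S → Disjoint B S →
    (CondIndepFam X hX P S A B ↔ DSepSet E A B S)

/-- `v` is strongly relevant to `C`: `X C` and `X v` are not conditionally independent
given all the remaining variables. -/
def StronglyRelevant [StandardBorelSpace Ω] (X : V → Ω → Val) (hX : ∀ v, Measurable (X v))
    (P : Measure Ω) [IsFiniteMeasure P] (C v : V) : Prop :=
  ¬ CondIndepFam X hX P (univ \ {C, v}) {C} {v}

end CFS

open CFS

section Aux
variable {V : Type*} {E : V → V → Prop}

lemma no_self_edge (hE : Acyclic E) (v : V) : ¬ E v v :=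
  fun h => hE v (Relation.TransGen.single h)

lemma edge_antisymm (hE : Acyclic E) {u v : V} (h : E u v) : ¬ E v u :=
  fun h' => hE u ((Relation.TransGen.single h).tail h')

lemma upath_one {X Y : V} (hXY : X ≠ Y) (h : Adj E X Y) :
    IsUPath E X Y 1 (fun t => if t = 0 then X else Y) := by
  refine ⟨one_pos, by simp, by simp, ?_, ?_⟩
  · intro s hs t ht hst
    interval_cases s <;> interval_cases t <;> simp_all
  · intro t ht
    interval_cases t; simpa using h

lemma blocked_one_false {S : Set V} {f : ℕ → V} (h : Blocked E S 1 f) : False := by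
  obtain ⟨t, ht0, ht1, -⟩ := h; omega

lemma mb_sub (hE : Acyclic E) (X : V) :
    ∀ S : Set V, X ∉ S → (∀ Y, Y ≠ X → Y ∉ S → DSep E X Y S) → mb E X ⊆ S := by
  intro S hXS hsep Y hY
  by_contra hYS
  rcases hY with (hPa | hCh) | hSp
  · -- parent
    have hne : Y ≠ X := fun h => no_self_edge hE X (h ▸ hPa)
    exact blocked_one_false
      (hsep Y hne hYS 1 _ (upath_one (Ne.symm hne) (Or.inr hPa)))
  · -- child
    have hne : Y ≠ X := fun h => no_self_edge hE X (h ▸ hCh)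
    exact blocked_one_false
      (hsep Y hne hYS 1 _ (upath_one (Ne.symm hne) (Or.inl hCh)))
  · obtain ⟨hYX, w, hYw, hXw⟩ := hSp
    have hwX : w ≠ X := fun h => no_self_edge hE X (h ▸ hXw)
    have hwY : w ≠ Y := fun h => no_self_edge hE Y (h ▸ hYw)
    by_cases hwS : w ∈ S
    · -- collider path X → w ← Y is unblocked
      set f : ℕ → V := fun t => if t = 0 then X else if t = 1 then w else Y with hf
      have hp : IsUPath E X Y 2 f := by
        refine ⟨by norm_num, by simp [hf], by simp [hf], ?_, ?_⟩
        · intro s hs t ht hst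
          interval_cases s <;> interval_cases t <;> simp_all [hf] <;> tauto
        · intro t ht
          interval_cases t
          · simpa [hf] using (show Adj E X w from Or.inl hXw)
          · simpa [hf] using (show Adj E w Y from Or.inr hYw)
      obtain ⟨t, ht0, ht2, hb⟩ := hsep Y hYX hYS 2 f hp
      have ht : t = 1 := by omega
      subst ht
      have hcol : ColliderAt E f 1 := by
        constructor <;> simp [hf, hXw, hYw]
      rcases hb with ⟨hnc, -⟩ | ⟨-, hw, -⟩
      · exact hnc hcol
      · exact hw (by simpa [hf] using hwS)
    · -- direct edge X → w with w ∉ S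
      exact blocked_one_false
        (hsep w hwX hwS 1 _ (upath_one (Ne.symm hwX) (Or.inl hXw)))

lemma mb_dsep (hE : Acyclic E) (X : V) :
    ∀ Y, Y ≠ X → Y ∉ mb E X → DSep E X Y (mb E X) := by
  intro Y hYX hYmb n f hp
  have h0 : f 0 = X := hp.start
  have hn : f n = Y := hp.finish
  have hpos := hp.pos
  have hadj0 : Adj E (f 0) (f 1) := hp.adj 0 hpos
  have ha_mb : f 1 ∈ mb E X := by
    rcases hadj0 with h | h
    · exact Or.inl (Or.inr (by rw [← h0]; exact h))
    · exact Or.inl (Or.inl (by rw [← h0]; exact h))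
  have h1n : 1 ≠ n := fun h => hYmb (by rw [← hn, ← h]; exact ha_mb)
  have hn2 : 2 ≤ n := by omega
  rcases hadj0 with h | h
  · -- edge X → f 1 : f 1 is a child
    by_cases hcol : ColliderAt E f 1
    · -- f 2 is a spouse, non-collider at position 2
      have h21 : E (f 2) (f 1) := hcol.2
      have h2X : f 2 ≠ X := by
        intro hc
        have := hp.inj 2 hn2 0 (by omega) (by rw [hc, h0])
        omega
      have hb_mb : f 2 ∈ mb E X :=
        Or.inr ⟨h2X, f 1, h21, by rwa [h0] at h⟩
      have h2n : 2 ≠ n := fun hc => hYmb (by rw [← hn, ← hc]; exact hb_mb)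
      refine ⟨2, by omega, by omega, Or.inl ⟨?_, hb_mb⟩⟩
      intro hc
      exact edge_antisymm hE h21 hc.1
    · exact ⟨1, one_pos, by omega, Or.inl ⟨hcol, ha_mb⟩⟩
  · -- edge f 1 → X : f 1 is a parent, non-collider at 1
    refine ⟨1, one_pos, by omega, Or.inl ⟨?_, ha_mb⟩⟩
    intro hc
    have := hc.1
    rw [h0] at this
    exact edge_antisymm hE this (by rwa [h0] at h)

lemma X_not_mem_mb (hE : Acyclic E) (X : V) : X ∉ mb E X := by
  rintro ((h | h) | ⟨h, -⟩)
  · exact no_self_edge hE X h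
  · exact no_self_edge hE X h
  · exact h rfl

end Aux

/-- In a DAG, any `S ⊆ V \ {X}` d-separating `X` from all vertices outside `S ∪ {X}`
contains `mb(X)`; consequently `mb(X)` is the unique minimal such set. -/
theorem stmt_8
    {V : Type*} [Fintype V] (E : V → V → Prop) (hE : Acyclic E) (X : V) :
    (∀ S : Set V, X ∉ S → (∀ Y, Y ≠ X → Y ∉ S → DSep E X Y S) → mb E X ⊆ S) ∧
    (X ∉ mb E X ∧ ∀ Y, Y ≠ X → Y ∉ mb E X → DSep E X Y (mb E X)) ∧
    (∀ S : Set V, X ∉ S → (∀ Y, Y ≠ X → Y ∉ S → DSep E X Y S) →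
      (∀ S' ⊂ S, ¬ (X ∉ S' ∧ ∀ Y, Y ≠ X → Y ∉ S' → DSep E X Y S')) → S = mb E X) := by
  refine ⟨mb_sub hE X, ⟨X_not_mem_mb hE X, mb_dsep hE X⟩, ?_⟩
  intro S hXS hsep hmin
  have hsub := mb_sub hE X S hXS hsep
  by_contra hne
  exact hmin (mb E X) (hsub.ssubset_of_ne (fun h => hne h.symm))
    ⟨X_not_mem_mb hE X, mb_dsep hE X⟩
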